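/- Let λ > 0 and let f, g : ℝ² → ℝ be continuous functions with compact support. If M_λ(R_θ f(t)) = M_λ(R_θ g(t)) for every angle θ ∈ [0,2π) and every t ∈ ℝ, then f = g. In other words, the Modulo Radon Transform is injective on the space of continuous compactly supported functions on ℝ² for every threshold λ > 0. -/

import Mathlib

open MeasureTheory Real

/-- The centered `2λ`-modulo operator `M_λ(t) = t − 2λ·⌊(t + λ)/(2λ)⌋`. -/
noncomputable def Mlam (lam t : ℝ) : ℝ := t - 2 * lam * ⌊(t + lam) / (2 * lam)⌋

/-- The Radon projection `R_θ f(t) = ∫ f(t·cos θ − s·sin θ, t·sin θ + s·cos θ) ds`. -/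
noncomputable def radonProj (f : ℝ × ℝ → ℝ) (θ t : ℝ) : ℝ :=
  ∫ s : ℝ, f (t * Real.cos θ - s * Real.sin θ, t * Real.sin θ + s * Real.cos θ)

open FourierTransform

noncomputable def rot (θ : ℝ) : ℝ × ℝ → ℝ × ℝ :=
  fun p => (p.1 * Real.cos θ - p.2 * Real.sin θ, p.1 * Real.sin θ + p.2 * Real.cos θ)

noncomputable def rotL (θ : ℝ) : (ℝ × ℝ) →ₗ[ℝ] (ℝ × ℝ) where
  toFun := rot θ
  map_add' p q := by refine Prod.ext ?_ ?_ <;> · simp [rot]; ring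
  map_smul' c p := by refine Prod.ext ?_ ?_ <;> · simp [rot]; ring

lemma rotL_det (θ : ℝ) : LinearMap.det (rotL θ) = 1 := by
  rw [← LinearMap.det_toMatrix (Module.Basis.finTwoProd ℝ), Matrix.det_fin_two]
  simp [LinearMap.toMatrix_apply, rotL, rot]
  nlinarith [Real.sin_sq_add_cos_sq θ]

noncomputable def rotH (θ : ℝ) : (ℝ × ℝ) ≃ₜ (ℝ × ℝ) where
  toFun := rot θ
  invFun := rot (-θ)
  left_inv p := by
    have h := Real.sin_sq_add_cos_sq θ
    simp only [rot, Real.cos_neg, Real.sin_neg]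
    refine Prod.ext ?_ ?_
    · simp; linear_combination (p.1 : ℝ) * h
    · simp; linear_combination (p.2 : ℝ) * h
  right_inv p := by
    have h := Real.sin_sq_add_cos_sq θ
    simp only [rot, Real.cos_neg, Real.sin_neg]
    refine Prod.ext ?_ ?_
    · simp; linear_combination (p.1 : ℝ) * h
    · simp; linear_combination (p.2 : ℝ) * h
  continuous_toFun := by unfold rot; fun_prop
  continuous_invFun := by unfold rot; fun_prop

lemma rot_mp (θ : ℝ) : MeasurePreserving (rot θ) volume volume := by
  have hm : Measurable (rot θ) := (rotH θ).continuous.measurable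
  refine ⟨hm, ?_⟩
  have : Measure.map (rotL θ) volume = ENNReal.ofReal |(LinearMap.det (rotL θ))⁻¹| • volume :=
    Measure.map_linearMap_addHaar_eq_smul_addHaar volume (by rw [rotL_det]; norm_num)
  exact (by simpa [rotL_det] using this : Measure.map (rotL θ) volume = volume)

lemma integral_rot {E : Type*} [NormedAddCommGroup E] [NormedSpace ℝ E] (θ : ℝ)
    (F : ℝ × ℝ → E) : ∫ p, F (rot θ p) = ∫ p, F p := by
  have he : MeasurableEmbedding (rot θ) := (rotH θ).measurableEmbedding
  exact (rot_mp θ).integral_comp he F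

lemma rot_sq (θ : ℝ) (p : ℝ × ℝ) :
    (rot θ p).1 ^ 2 + (rot θ p).2 ^ 2 = p.1 ^ 2 + p.2 ^ 2 := by
  have h := Real.sin_sq_add_cos_sq θ
  simp only [rot]
  linear_combination (p.1 ^ 2 + p.2 ^ 2) * h

/-- A radius controlling the support. -/
lemma exists_radius {E : Type*} [NormedAddCommGroup E] {φ : ℝ × ℝ → E}
    (hs : HasCompactSupport φ) :
    ∃ R : ℝ, 0 ≤ R ∧ ∀ p : ℝ × ℝ, ¬(|p.1| ≤ R ∧ |p.2| ≤ R) → φ p = 0 := by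
  obtain ⟨R, hR⟩ := hs.isCompact.isBounded.subset_closedBall 0
  refine ⟨max R 0, le_max_right _ _, fun p hp => ?_⟩
  by_contra h
  have hp' : p ∈ tsupport φ := subset_tsupport φ (by simp [Function.mem_support, h])
  have := hR hp'
  simp only [Metric.mem_closedBall, dist_zero_right, Prod.norm_def] at this
  rw [Real.norm_eq_abs, Real.norm_eq_abs] at this
  exact hp ⟨((le_max_left _ _).trans this).trans (le_max_left _ _),
    ((le_max_right _ _).trans this).trans (le_max_left _ _)⟩

lemma rot_support {E : Type*} [NormedAddCommGroup E] {φ : ℝ × ℝ → E} {R : ℝ}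
    (hR : 0 ≤ R) (h : ∀ p : ℝ × ℝ, ¬(|p.1| ≤ R ∧ |p.2| ≤ R) → φ p = 0)
    (θ t s : ℝ) (hts : ¬(|t| ≤ 2 * R ∧ |s| ≤ 2 * R)) : φ (rot θ (t, s)) = 0 := by
  by_contra hne
  have hb : |(rot θ (t, s)).1| ≤ R ∧ |(rot θ (t, s)).2| ≤ R := by
    by_contra hb; exact hne (h _ hb)
  have hsq := rot_sq θ (t, s)
  have h1 : (rot θ (t, s)).1 ^ 2 ≤ R ^ 2 := by
    rw [← sq_abs]; exact pow_le_pow_left₀ (abs_nonneg _) hb.1 2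
  have h2 : (rot θ (t, s)).2 ^ 2 ≤ R ^ 2 := by
    rw [← sq_abs]; exact pow_le_pow_left₀ (abs_nonneg _) hb.2 2
  refine hts ⟨?_, ?_⟩ <;>
  · nlinarith [sq_abs t, sq_abs s, abs_nonneg t, abs_nonneg s, sq_nonneg t, sq_nonneg s]

/-- Continuity of a parametric integral with uniformly compactly supported integrand. -/
lemma cont_int {E : Type*} [NormedAddCommGroup E] [NormedSpace ℝ E] {ψ : ℝ → ℝ → E}
    (hc : Continuous fun p : ℝ × ℝ => ψ p.1 p.2) {C R : ℝ}
    (hb : ∀ t s, ‖ψ t s‖ ≤ C) (hv : ∀ t s, ¬|s| ≤ R → ψ t s = 0) :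
    Continuous fun t => ∫ s, ψ t s := by
  apply continuous_of_dominated (bound := Set.indicator (Set.Icc (-R) R) fun _ => C)
  · exact fun t => (hc.comp (continuous_const.prodMk continuous_id)).aestronglyMeasurable
  · intro t
    filter_upwards with s
    by_cases hs : s ∈ Set.Icc (-R) R
    · rw [Set.indicator_of_mem hs]; exact hb t s
    · rw [Set.indicator_of_notMem hs, hv t s (by simpa [abs_le] using hs)]
      simp
  · exact (integrableOn_const (measure_Icc_lt_top.ne)).integrable_indicator
      measurableSet_Icc
  · filter_upwards with s
    exact hc.comp (continuous_id.prodMk continuous_const)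

lemma slice_integrable {E : Type*} [NormedAddCommGroup E] [NormedSpace ℝ E] {φ : ℝ × ℝ → E}
    (hc : Continuous φ) (hs : HasCompactSupport φ) (θ t : ℝ) :
    Integrable fun s => φ (rot θ (t, s)) := by
  obtain ⟨R, hR0, hR⟩ := exists_radius hs
  apply Continuous.integrable_of_hasCompactSupport
  · exact hc.comp ((rotH θ).continuous.comp (continuous_const.prodMk continuous_id))
  · apply HasCompactSupport.intro (isCompact_Icc (a := -(2*R)) (b := 2*R))
    intro s hsm
    exact rot_support hR0 hR θ t s (fun hh => hsm (by constructor <;> [linarith [abs_le.1 hh.2 |>.1]; linarith [abs_le.1 hh.2 |>.2]]))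

noncomputable def radonProj' (f : ℝ × ℝ → ℝ) (θ t : ℝ) : ℝ :=
  ∫ s : ℝ, f (t * Real.cos θ - s * Real.sin θ, t * Real.sin θ + s * Real.cos θ)

lemma radonProj'_eq (f : ℝ × ℝ → ℝ) (θ t : ℝ) :
    radonProj' f θ t = ∫ s : ℝ, f (rot θ (t, s)) := rfl

lemma radonProj'_sub {f g : ℝ × ℝ → ℝ} (hf : Continuous f) (hg : Continuous g)
    (hfs : HasCompactSupport f) (hgs : HasCompactSupport g) (θ t : ℝ) :
    radonProj' (f - g) θ t = radonProj' f θ t - radonProj' g θ t := by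
  simp only [radonProj'_eq, Pi.sub_apply]
  exact integral_sub (slice_integrable hf hfs θ t) (slice_integrable hg hgs θ t)

lemma radonProj'_continuous {φ : ℝ × ℝ → ℝ} (hc : Continuous φ) (hs : HasCompactSupport φ)
    (θ : ℝ) : Continuous fun t => radonProj' φ θ t := by
  obtain ⟨R, hR0, hR⟩ := exists_radius hs
  obtain ⟨C, hC⟩ := hc.bounded_above_of_compact_support hs
  simp only [radonProj'_eq]
  exact cont_int (ψ := fun t s => φ (rot θ (t, s)))
    (hc.comp ((rotH θ).continuous)) (fun t s => hC _)
    (fun t s hsR => rot_support hR0 hR θ t s (fun hh => hsR hh.2))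

lemma radonProj'_vanish {φ : ℝ × ℝ → ℝ} (hs : HasCompactSupport φ) {R : ℝ} (hR0 : 0 ≤ R)
    (hR : ∀ p : ℝ × ℝ, ¬(|p.1| ≤ R ∧ |p.2| ≤ R) → φ p = 0)
    (θ t : ℝ) (ht : ¬|t| ≤ 2 * R) : radonProj' φ θ t = 0 := by
  rw [radonProj'_eq]
  have : ∀ s : ℝ, φ (rot θ (t, s)) = 0 := fun s =>
    rot_support hR0 hR θ t s (fun hh => ht hh.1)
  simp [this]

/-- A continuous function with values in `2λℤ` vanishing far away is identically zero. -/
lemma vanish_of_discrete {u : ℝ → ℝ} (hu : Continuous u) {lam T : ℝ} (hlam : 0 < lam)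
    (hT : 0 ≤ T) (hz : ∀ t, ¬|t| ≤ T → u t = 0)
    (hint : ∀ t, ∃ n : ℤ, u t = 2 * lam * n) : ∀ t, u t = 0 := by
  intro t
  by_contra hne
  obtain ⟨n, hn⟩ := hint t
  set b := T + |t| + 1 with hb
  have hub : u b = 0 := by
    refine hz b (not_le.mpr ?_)
    rw [hb, abs_of_nonneg (by positivity)]
    linarith [abs_nonneg t]
  have key : ∀ v : ℝ, v ∈ Set.uIcc (u t) (u b) → ∃ c, u c = v := by
    intro v hv
    obtain ⟨c, _, hc⟩ := intermediate_value_uIcc (a := t) (b := b) hu.continuousOn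
      (Set.uIcc_subset_uIcc (by simp) (by simp) hv)
    exact ⟨c, hc⟩
  rw [hub] at key
  rcases lt_or_gt_of_ne hne with hneg | hpos
  · -- u t < 0, so u t ≤ -2 lam; pick v = -lam
    have hn1 : (n : ℝ) ≤ -1 := by
      have h0 : (n : ℝ) < 0 := by nlinarith
      have h0' : n < 0 := by exact_mod_cast h0
      exact_mod_cast (by omega : n ≤ -1)
    have hut : u t ≤ -(2 * lam) := by nlinarith
    obtain ⟨c, hc⟩ := key (-lam) (by
      rw [Set.mem_uIcc]; left; constructor <;> nlinarith)
    obtain ⟨m, hm⟩ := hint c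
    rw [hc] at hm
    rcases le_or_gt (m : ℝ) (-1) with h1 | h1
    · nlinarith
    · have : (0 : ℝ) ≤ m := by
        have : (-1 : ℤ) < m := by exact_mod_cast h1
        exact_mod_cast by omega
      nlinarith
  · have hn1 : (1 : ℝ) ≤ (n : ℝ) := by
      have : (0 : ℝ) < n := by nlinarith
      have : (0 : ℤ) < n := by exact_mod_cast this
      exact_mod_cast this
    have hut : 2 * lam ≤ u t := by nlinarith
    obtain ⟨c, hc⟩ := key lam (by
      rw [Set.mem_uIcc]; right; constructor <;> nlinarith)
    obtain ⟨m, hm⟩ := hint c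
    rw [hc] at hm
    rcases le_or_gt (m : ℝ) 0 with h1 | h1
    · nlinarith
    · have : (1 : ℝ) ≤ m := by
        have : (0 : ℤ) < m := by exact_mod_cast h1
        exact_mod_cast this
      nlinarith

noncomputable def ch (r : ℝ) : ℂ := Complex.exp ((↑(-2 * π * r) : ℂ) * Complex.I)

lemma ch_add (r s : ℝ) : ch (r + s) = ch r * ch s := by
  rw [ch, ch, ch, ← Complex.exp_add]
  congr 1
  push_cast
  ring

lemma ch_norm (r : ℝ) : ‖ch r‖ = 1 := by
  rw [show ch r = Complex.exp ((↑(-2 * π * r) : ℂ) * Complex.I) from rfl,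
    Complex.norm_exp]
  norm_num [Complex.ofReal_mul, Complex.mul_I_re]

lemma ch_continuous : Continuous ch := by
  unfold ch
  fun_prop

lemma fourier_eq (φ : ℝ → ℂ) (w : ℝ) : 𝓕 φ w = ∫ v : ℝ, ch (v * w) * φ v := by
  rw [Real.fourier_eq']
  congr 1 with v
  rw [RCLike.inner_apply, conj_trivial, mul_comm w v, smul_eq_mul]; rfl

/-- A continuous compactly supported function on `ℝ` whose Fourier transform vanishes is zero. -/
lemma fourier_inj {φ : ℝ → ℂ} (hc : Continuous φ) (hs : HasCompactSupport φ)
    (hz : ∀ w : ℝ, ∫ v : ℝ, ch (v * w) * φ v = 0) : φ = 0 := by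
  have hF : 𝓕 φ = 0 := by ext w; rw [fourier_eq]; exact hz w
  have hi : Integrable φ := hc.integrable_of_hasCompactSupport hs
  have hi' : Integrable (𝓕 φ) := by rw [hF]; exact integrable_zero _ _ _
  have := hc.fourierInv_fourier_eq hi hi'
  rw [hF] at this
  rw [← this]
  ext v
  rw [Real.fourierInv_eq]
  simp

lemma exists_angle (a b : ℝ) :
    ∃ r θ : ℝ, 0 ≤ r ∧ θ ∈ Set.Ico (0 : ℝ) (2 * π) ∧ a = r * Real.cos θ ∧ b = r * Real.sin θ := by
  by_cases h0 : a = 0 ∧ b = 0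
  · exact ⟨0, 0, le_refl _, ⟨le_refl _, by positivity⟩, by simp [h0.1], by simp [h0.2]⟩
  · set r := Real.sqrt (a ^ 2 + b ^ 2) with hr
    have hr2 : r ^ 2 = a ^ 2 + b ^ 2 := Real.sq_sqrt (by positivity)
    have hrpos : 0 < r := by
      rcases not_and_or.mp h0 with h | h <;>
      · apply Real.sqrt_pos.mpr
        have : a ^ 2 ≠ 0 ∨ b ^ 2 ≠ 0 := by
          first
          | exact Or.inl (pow_ne_zero 2 h) | exact Or.inr (pow_ne_zero 2 h)
          | rcases h with h | h
        rcases not_and_or.mp h0 with h | h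
        · nlinarith [sq_nonneg a, sq_nonneg b, sq_abs a, abs_pos.mpr h]
        · nlinarith [sq_nonneg a, sq_nonneg b, sq_abs b, abs_pos.mpr h]
    have hale : -1 ≤ a / r ∧ a / r ≤ 1 := by
      rw [div_le_one hrpos, le_div_iff₀ hrpos]
      constructor <;> nlinarith [sq_nonneg (a - r), sq_nonneg (a + r), sq_nonneg b]
    have hcos : Real.cos (Real.arccos (a / r)) = a / r := Real.cos_arccos hale.1 hale.2
    have hsin : Real.sin (Real.arccos (a / r)) = |b| / r := by
      rw [Real.sin_arccos]
      have : 1 - (a / r) ^ 2 = (|b| / r) ^ 2 := by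
        rw [div_pow, div_pow, sq_abs]
        field_simp
        nlinarith
      rw [this, Real.sqrt_sq (by positivity)]
    by_cases hb : 0 ≤ b
    · refine ⟨r, Real.arccos (a / r), hrpos.le, ⟨Real.arccos_nonneg _, ?_⟩, ?_, ?_⟩
      · have := Real.arccos_le_pi (a / r); nlinarith [Real.pi_pos]
      · rw [hcos]; field_simp
      · rw [hsin, abs_of_nonneg hb]; field_simp
    · push_neg at hb
      refine ⟨r, 2 * π - Real.arccos (a / r), hrpos.le, ⟨?_, ?_⟩, ?_, ?_⟩
      · have := Real.arccos_le_pi (a / r); nlinarith [Real.pi_pos]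
      · have : 0 < Real.arccos (a / r) := Real.arccos_pos.mpr (by
          rw [div_lt_one hrpos]
          nlinarith [abs_pos.mpr (ne_of_lt hb), sq_abs b, sq_abs a, abs_nonneg a,
            sq_nonneg (a - r), abs_le.mp (le_refl |a|)])
        linarith
      · rw [Real.cos_sub, Real.cos_two_pi, Real.sin_two_pi, hcos]; field_simp; ring
      · rw [Real.sin_sub, Real.cos_two_pi, Real.sin_two_pi, hsin, abs_of_neg hb]
        field_simp; ring

lemma step2 {h : ℝ × ℝ → ℝ} (hhc : Continuous h) (hhs : HasCompactSupport h)
    (hrad : ∀ θ ∈ Set.Ico (0 : ℝ) (2 * π), ∀ t : ℝ, radonProj' h θ t = 0) (a b : ℝ) :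
    ∫ p : ℝ × ℝ, ch (p.1 * a + p.2 * b) * (h p : ℂ) = 0 := by
  obtain ⟨r, θ, hr0, hθ, ha, hb⟩ := exists_angle a b
  set H : ℝ × ℝ → ℂ := fun p => (h p : ℂ) with hH
  have hHc : Continuous H := Complex.continuous_ofReal.comp hhc
  have hHs : HasCompactSupport H := hhs.comp_left (g := (↑· : ℝ → ℂ)) Complex.ofReal_zero
  set K : ℝ × ℝ → ℂ := fun p => ch (p.1 * a + p.2 * b) * H p with hK
  have hKc : Continuous K := by
    apply Continuous.mul _ hHc
    exact ch_continuous.comp (by fun_prop)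
  have hKs : HasCompactSupport K := hHs.mul_left
  have key : ∀ q : ℝ × ℝ, K (rot θ q) = ch (q.1 * r) * H (rot θ q) := by
    intro q
    have hsc := Real.sin_sq_add_cos_sq θ
    have harg : (rot θ q).1 * a + (rot θ q).2 * b = q.1 * r := by
      simp only [rot, ha, hb]
      linear_combination (q.1 * r) * hsc
    show ch ((rot θ q).1 * a + (rot θ q).2 * b) * H (rot θ q) = _
    rw [harg]
  calc ∫ p : ℝ × ℝ, K p = ∫ q : ℝ × ℝ, K (rot θ q) := (integral_rot θ K).symm
    _ = ∫ q : ℝ × ℝ, ch (q.1 * r) * H (rot θ q) := by simp_rw [key]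
    _ = 0 := by
      have hint : Integrable (fun q : ℝ × ℝ => ch (q.1 * r) * H (rot θ q))
          (volume.prod volume) := by
        rw [← Measure.volume_eq_prod]
        apply Continuous.integrable_of_hasCompactSupport
        · exact (ch_continuous.comp (by fun_prop)).mul (hHc.comp (rotH θ).continuous)
        · exact (hHs.comp_homeomorph (rotH θ)).mul_left
      rw [Measure.volume_eq_prod, integral_prod _ hint]
      have inner0 : ∀ t : ℝ, (∫ s : ℝ, ch (t * r) * H (rot θ (t, s))) = 0 := by
        intro t
        rw [show (fun s : ℝ => ch (t * r) * H (rot θ (t, s)))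
            = fun s : ℝ => ch (t * r) • H (rot θ (t, s)) by simp [smul_eq_mul]]
        rw [integral_smul]
        have : (∫ s : ℝ, H (rot θ (t, s))) = ((radonProj' h θ t : ℝ) : ℂ) := by
          rw [radonProj'_eq]
          exact integral_ofReal
        rw [this, hrad θ hθ t]
        simp
      simp_rw [inner0]
      simp

lemma step3 {h : ℝ × ℝ → ℝ} (hhc : Continuous h) (hhs : HasCompactSupport h)
    (hzero2 : ∀ a b : ℝ, ∫ p : ℝ × ℝ, ch (p.1 * a + p.2 * b) * (h p : ℂ) = 0) :
    ∀ p : ℝ × ℝ, h p = 0 := by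
  set H : ℝ × ℝ → ℂ := fun p => (h p : ℂ) with hHdef
  have hHc : Continuous H := Complex.continuous_ofReal.comp hhc
  have hHs : HasCompactSupport H := hhs.comp_left (g := (↑· : ℝ → ℂ)) Complex.ofReal_zero
  obtain ⟨R, hR0, hR⟩ := exists_radius hhs
  obtain ⟨C, hC⟩ := hhc.bounded_above_of_compact_support hhs
  set H1 : ℝ → ℝ → ℂ := fun x b => ∫ y : ℝ, ch (y * b) * H (x, y) with hH1def
  have claimA : ∀ a b : ℝ, ∫ x : ℝ, ch (x * a) * H1 x b = 0 := by
    intro a b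
    have hint : Integrable (fun p : ℝ × ℝ => ch (p.1 * a + p.2 * b) * H p)
        (volume.prod volume) := by
      rw [← Measure.volume_eq_prod]
      apply Continuous.integrable_of_hasCompactSupport
      · exact (ch_continuous.comp (by fun_prop)).mul hHc
      · exact hHs.mul_left
    have h2 := hzero2 a b
    rw [Measure.volume_eq_prod, integral_prod _ hint] at h2
    rw [← h2]
    refine (integral_congr_ae (Filter.Eventually.of_forall fun x => ?_)).symm
    calc (∫ y : ℝ, ch (x * a + y * b) * H (x, y))
        = ∫ y : ℝ, ch (x * a) • (ch (y * b) * H (x, y)) := by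
          simp_rw [ch_add, smul_eq_mul, mul_assoc]
      _ = ch (x * a) • H1 x b := integral_smul _ _
      _ = ch (x * a) * H1 x b := by rw [smul_eq_mul]
  have claimB : ∀ b x : ℝ, H1 x b = 0 := by
    intro b x
    have hcont : Continuous fun x => H1 x b := by
      refine cont_int (ψ := fun x y => ch (y * b) * H (x, y)) ?_ (C := C) (R := R) ?_ ?_
      · exact (ch_continuous.comp (by fun_prop)).mul (hHc.comp (by fun_prop))
      · intro t s
        rw [norm_mul, ch_norm, one_mul, hHdef]
        simpa using hC (t, s)
      · intro t s hsR
        have : h (t, s) = 0 := hR (t, s) (fun hh => hsR hh.2)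
        simp [hHdef, this]
    have hsupp : HasCompactSupport fun x => H1 x b := by
      apply HasCompactSupport.intro (isCompact_Icc (a := -R) (b := R))
      intro x hx
      have hxR : ¬|x| ≤ R := by simpa [Set.mem_Icc, abs_le] using hx
      have : ∀ y : ℝ, ch (y * b) * H (x, y) = 0 := by
        intro y
        have : h (x, y) = 0 := hR (x, y) (fun hh => hxR hh.1)
        simp [hHdef, this]
      simp only [hH1def]
      rw [show (fun y : ℝ => ch (y * b) * H (x, y)) = fun _ => (0 : ℂ) from funext this]
      simp
    have := fourier_inj hcont hsupp (fun w => claimA w b)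
    exact congrFun this x
  have claimC : ∀ x y : ℝ, H (x, y) = 0 := by
    intro x y
    have hcont : Continuous fun y => H (x, y) := hHc.comp (by fun_prop)
    have hsupp : HasCompactSupport fun y => H (x, y) := by
      apply HasCompactSupport.intro (isCompact_Icc (a := -R) (b := R))
      intro y hy
      have hyR : ¬|y| ≤ R := by simpa [Set.mem_Icc, abs_le] using hy
      have : h (x, y) = 0 := hR (x, y) (fun hh => hyR hh.2)
      simp [hHdef, this]
    have := fourier_inj hcont hsupp (fun w => claimB w x)
    exact congrFun this y
  intro p
  have h2 := claimC p.1 p.2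
  have h3 : ((h p : ℂ)) = 0 := by simpa [hHdef] using h2
  exact_mod_cast h3

theorem stmt7 (lam : ℝ) (hlam : 0 < lam) (f g : ℝ × ℝ → ℝ)
    (hf : Continuous f) (hg : Continuous g)
    (hfs : HasCompactSupport f) (hgs : HasCompactSupport g)
    (heq : ∀ θ ∈ Set.Ico (0 : ℝ) (2 * π), ∀ t : ℝ,
      Mlam lam (radonProj f θ t) = Mlam lam (radonProj g θ t)) :
    f = g := by
  have hrp : radonProj = radonProj' := rfl
  set h : ℝ × ℝ → ℝ := f - g with hh
  have hhc : Continuous h := hf.sub hg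
  have hhs : HasCompactSupport h := by
    rw [hh, sub_eq_add_neg]
    exact hfs.add (hgs.comp_left neg_zero)
  obtain ⟨R, hR0, hR⟩ := exists_radius hhs
  have hrad : ∀ θ ∈ Set.Ico (0 : ℝ) (2 * π), ∀ t : ℝ, radonProj' h θ t = 0 := by
    intro θ hθ
    refine vanish_of_discrete (radonProj'_continuous hhc hhs θ) hlam
      (by positivity : (0 : ℝ) ≤ 2 * R) (fun t ht => radonProj'_vanish hhs hR0 hR θ t ht) ?_
    intro t
    have hml := heq θ hθ t
    rw [hrp] at hml
    refine ⟨⌊(radonProj' f θ t + lam) / (2 * lam)⌋ - ⌊(radonProj' g θ t + lam) / (2 * lam)⌋, ?_⟩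
    rw [hh, radonProj'_sub hf hg hfs hgs]
    simp only [Mlam] at hml
    push_cast
    linarith
  have hz2 := fun a b => step2 hhc hhs hrad a b
  have h0 := step3 hhc hhs hz2
  funext p
  have := h0 p
  rw [hh] at this
  simpa [sub_eq_zero] using this
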